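/- Let F ∈ ℕ, η > 0, L > 0, and let G = (V, E) be a directed graph on a finite vertex set that is (2F+1)-robust. Let A ⊆ V be an F-local set of Byzantine adversarial nodes and R = V ∖ A the regular nodes, each regular node i holding a convex function f_i : ℝ → ℝ all of whose subgradients are bounded in magnitude by L. Suppose the regular nodes run the LF dynamics with parameter F in the Byzantine model with weights lower bounded by η and nonnegative step-sizes α_t → 0. Then there exists a sequence of stochastic vectors q_t ∈ ℝ^R (nonnegative entries summing to 1), t ∈ ℕ, such that max_{i∈R} |x_i(t) − ∑_{j∈R} (q_t)_j x_j(t)| → 0 as t → ∞; in particular the regular nodes reach consensus regardless of the adversarial nodes' transmissions. -/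

import Mathlib

open Filter
open scoped Classical

/-- The in-neighborhood of `v` in the directed graph with edge relation `E`
(`E u v` means there is an edge from `u` to `v`). -/
noncomputable def NIn {V : Type*} [Fintype V] (E : V → V → Prop) (v : V) : Finset V :=
  Finset.univ.filter (fun u => E u v)

/-- A set `S` is `r`-reachable if some vertex of `S` has at least `r` in-neighbors outside `S`. -/
def RReachable {V : Type*} [Fintype V] (E : V → V → Prop) (r : ℕ) (S : Finset V) : Prop :=
  ∃ v ∈ S, r ≤ ((NIn E v) \ S).card

/-- A directed graph is `r`-robust if for every pair of disjoint nonempty vertex subsets,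
at least one of them is `r`-reachable. -/
def RRobust {V : Type*} [Fintype V] (E : V → V → Prop) (r : ℕ) : Prop :=
  ∀ S₁ S₂ : Finset V, S₁.Nonempty → S₂.Nonempty → Disjoint S₁ S₂ →
    RReachable E r S₁ ∨ RReachable E r S₂

/-- A directed graph is `(r,s)`-robust if for every pair of disjoint nonempty vertex
subsets `S₁, S₂`, either every node of `S₁` has at least `r` in-neighbors outside `S₁`,
or every node of `S₂` has at least `r` in-neighbors outside `S₂`, or at least `s` nodes
of `S₁ ∪ S₂` have at least `r` in-neighbors outside their respective sets. -/
def RSRobust {V : Type*} [Fintype V] (E : V → V → Prop) (r s : ℕ) : Prop :=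
  ∀ S₁ S₂ : Finset V, S₁.Nonempty → S₂.Nonempty → Disjoint S₁ S₂ →
    (∀ v ∈ S₁, r ≤ ((NIn E v) \ S₁).card) ∨
    (∀ v ∈ S₂, r ≤ ((NIn E v) \ S₂).card) ∨
    s ≤ ((S₁.filter (fun v => r ≤ ((NIn E v) \ S₁).card)) ∪
         (S₂.filter (fun v => r ≤ ((NIn E v) \ S₂).card))).card

/-- `d` is a subgradient of `f` at `x`. -/
def IsSubgradient (f : ℝ → ℝ) (x d : ℝ) : Prop :=
  ∀ y, f x + d * (y - x) ≤ f y

/-- All subgradients of `f` are bounded in magnitude by `L`. -/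
def HasBoundedSubgradients (f : ℝ → ℝ) (L : ℝ) : Prop :=
  ∀ x d, IsSubgradient f x d → |d| ≤ L

/-- `J` is an admissible LF-retained set with parameter `F` for the values `ξ` on the
in-neighborhood `N`, relative to the node's own value `xi`:  `J = N \ (H ∪ L)` where `H`
consists of (at most) the `F` largest received values strictly greater than `xi` (all of
them if there are fewer than `F`), and symmetrically `L` consists of (at most) the `F`
smallest received values strictly less than `xi`. -/
def IsLFRetained {ι : Type*} [DecidableEq ι] (F : ℕ) (N : Finset ι) (ξ : ι → ℝ)
    (xi : ℝ) (J : Finset ι) : Prop :=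
  ∃ H L : Finset ι,
    J = N \ (H ∪ L) ∧
    H ⊆ N.filter (fun j => xi < ξ j) ∧
    (∀ j ∈ H, ∀ k ∈ (N.filter (fun j => xi < ξ j)) \ H, ξ k ≤ ξ j) ∧
    ((N.filter (fun j => xi < ξ j)).card ≤ F → H = N.filter (fun j => xi < ξ j)) ∧
    (F < (N.filter (fun j => xi < ξ j)).card → H.card = F) ∧
    L ⊆ N.filter (fun j => ξ j < xi) ∧
    (∀ j ∈ L, ∀ k ∈ (N.filter (fun j => ξ j < xi)) \ L, ξ j ≤ ξ k) ∧
    ((N.filter (fun j => ξ j < xi)).card ≤ F → L = N.filter (fun j => ξ j < xi)) ∧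
    (F < (N.filter (fun j => ξ j < xi)).card → L.card = F)

/-- The LF dynamics with parameter `F` in the malicious (broadcast) model: at each
time-step, each regular node `i ∈ R` filters the values of its in-neighbors (the same
broadcast values `x t j` for all receivers), forms a convex combination of its own value
and the retained values with weights lower bounded by `η`, and takes a subgradient step
of its local function `f i` with step-size `α t`. -/
def LFMalicious {V : Type*} [Fintype V] [DecidableEq V] (E : V → V → Prop) (F : ℕ)
    (η : ℝ) (R : Finset V) (f : V → ℝ → ℝ) (α : ℕ → ℝ) (x : ℕ → V → ℝ) : Prop :=
  ∀ t : ℕ, ∀ i ∈ R, ∃ (J : Finset V) (a : V → ℝ) (d : ℝ),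
    IsLFRetained F (NIn E i) (x t) (x t i) J ∧
    (∀ j ∈ insert i J, η ≤ a j) ∧
    a i + ∑ j ∈ J, a j = 1 ∧
    IsSubgradient (f i) (a i * x t i + ∑ j ∈ J, a j * x t j) d ∧
    x (t + 1) i = (a i * x t i + ∑ j ∈ J, a j * x t j) - α t * d

/-- The LF dynamics with parameter `F` in the Byzantine model: `χ t i j` is the value
received by node `i` from its in-neighbor `j` at time `t` (equal to the true state
`x t j` whenever `j` is regular, arbitrary otherwise); each regular node filters the
received values, forms a convex combination with weights lower bounded by `η`, and takes
a subgradient step of its local function. -/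
def LFByzantine {V : Type*} [Fintype V] [DecidableEq V] (E : V → V → Prop) (F : ℕ)
    (η : ℝ) (R : Finset V) (f : V → ℝ → ℝ) (α : ℕ → ℝ) (x : ℕ → V → ℝ)
    (χ : ℕ → V → V → ℝ) : Prop :=
  (∀ t : ℕ, ∀ i ∈ R, ∀ j ∈ R, χ t i j = x t j) ∧
  ∀ t : ℕ, ∀ i ∈ R, ∃ (J : Finset V) (a : V → ℝ) (d : ℝ),
    IsLFRetained F (NIn E i) (χ t i) (x t i) J ∧
    (∀ j ∈ insert i J, η ≤ a j) ∧
    a i + ∑ j ∈ J, a j = 1 ∧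
    IsSubgradient (f i) (a i * x t i + ∑ j ∈ J, a j * χ t i j) d ∧
    x (t + 1) i = (a i * x t i + ∑ j ∈ J, a j * χ t i j) - α t * d

/-- Consensus under `F`-local Byzantine adversaries in `(2F+1)`-robust networks: there
is a sequence of stochastic vectors `q t` (supported on the regular nodes `R = Aᶜ`) such
that every regular state tracks the convex combination `y(t) = qₜᵀ x_R(t)`; in
particular the regular nodes reach consensus regardless of the adversaries' actions. -/

lemma retained_le {ι : Type*} [DecidableEq ι] {F : ℕ} {N : Finset ι} {ξ : ι → ℝ}
    {xi : ℝ} {J : Finset ι} (h : IsLFRetained F N ξ xi J)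
    {A : Finset ι} (hFA : (N ∩ A).card ≤ F)
    {M : ℝ} (hxi : xi ≤ M) (hreg : ∀ j ∈ N, j ∉ A → ξ j ≤ M) :
    ∀ j ∈ J, ξ j ≤ M := by
  obtain ⟨H, Lo, hJ, hHsub, hHmax, hHall, hHcard, -, -, -, -⟩ := h
  intro j hj
  by_contra hgt
  push_neg at hgt
  subst hJ
  rw [Finset.mem_sdiff, Finset.mem_union] at hj
  obtain ⟨hjN, hjHL⟩ := hj
  have hjH : j ∉ H := fun h => hjHL (Or.inl h)
  have hxiξ : xi < ξ j := lt_of_le_of_lt hxi hgt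
  have hjΦ : j ∈ N.filter (fun k => xi < ξ k) := Finset.mem_filter.mpr ⟨hjN, hxiξ⟩
  by_cases hc : (N.filter (fun k => xi < ξ k)).card ≤ F
  · exact hjH (hHall hc ▸ hjΦ)
  · push_neg at hc
    have hHF := hHcard hc
    have hHA : ∀ k ∈ H, k ∈ N ∩ A := by
      intro k hk
      have hkΦ := hHsub hk
      have hkN := (Finset.mem_filter.mp hkΦ).1
      refine Finset.mem_inter.mpr ⟨hkN, ?_⟩
      by_contra hkA
      have h1 := hreg k hkN hkA
      have hkξ : ξ j ≤ ξ k := hHmax k hk j (Finset.mem_sdiff.mpr ⟨hjΦ, hjH⟩)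
      linarith
    have hjA : j ∈ N ∩ A := by
      refine Finset.mem_inter.mpr ⟨hjN, ?_⟩
      by_contra hjA
      exact absurd (hreg j hjN hjA) (not_le.mpr hgt)
    have hsub : insert j H ⊆ N ∩ A := by
      intro k hk
      rcases Finset.mem_insert.mp hk with rfl | hk
      · exact hjA
      · exact hHA k hk
    have hcard := Finset.card_le_card hsub
    rw [Finset.card_insert_of_notMem hjH, hHF] at hcard
    omega

lemma retained_ge {ι : Type*} [DecidableEq ι] {F : ℕ} {N : Finset ι} {ξ : ι → ℝ}
    {xi : ℝ} {J : Finset ι} (h : IsLFRetained F N ξ xi J)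
    {A : Finset ι} (hFA : (N ∩ A).card ≤ F)
    {M : ℝ} (hxi : M ≤ xi) (hreg : ∀ j ∈ N, j ∉ A → M ≤ ξ j) :
    ∀ j ∈ J, M ≤ ξ j := by
  obtain ⟨H, Lo, hJ, -, -, -, -, hLsub, hLmin, hLall, hLcard⟩ := h
  intro j hj
  by_contra hgt
  push_neg at hgt
  subst hJ
  rw [Finset.mem_sdiff, Finset.mem_union] at hj
  obtain ⟨hjN, hjHL⟩ := hj
  have hjL : j ∉ Lo := fun h => hjHL (Or.inr h)
  have hxiξ : ξ j < xi := lt_of_lt_of_le hgt hxi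
  have hjΦ : j ∈ N.filter (fun k => ξ k < xi) := Finset.mem_filter.mpr ⟨hjN, hxiξ⟩
  by_cases hc : (N.filter (fun k => ξ k < xi)).card ≤ F
  · exact hjL (hLall hc ▸ hjΦ)
  · push_neg at hc
    have hLF := hLcard hc
    have hLA : ∀ k ∈ Lo, k ∈ N ∩ A := by
      intro k hk
      have hkΦ := hLsub hk
      have hkN := (Finset.mem_filter.mp hkΦ).1
      refine Finset.mem_inter.mpr ⟨hkN, ?_⟩
      by_contra hkA
      have h1 := hreg k hkN hkA
      have hkξ : ξ k ≤ ξ j := hLmin k hk j (Finset.mem_sdiff.mpr ⟨hjΦ, hjL⟩)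
      linarith
    have hjA : j ∈ N ∩ A := by
      refine Finset.mem_inter.mpr ⟨hjN, ?_⟩
      by_contra hjA
      exact absurd (hreg j hjN hjA) (not_le.mpr hgt)
    have hsub : insert j Lo ⊆ N ∩ A := by
      intro k hk
      rcases Finset.mem_insert.mp hk with rfl | hk
      · exact hjA
      · exact hLA k hk
    have hcard := Finset.card_le_card hsub
    rw [Finset.card_insert_of_notMem hjL, hLF] at hcard
    omega

lemma tendsto_of_contract {b e : ℕ → ℝ} {γ : ℝ} {n : ℕ} (hn : 0 < n)
    (hγ0 : 0 < γ) (hγ1 : γ ≤ 1) (hb : ∀ t, 0 ≤ b t)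
    (hrec : ∀ t, b (t + n) ≤ (1 - γ) * b t + e t)
    (he : Tendsto e atTop (nhds 0)) : Tendsto b atTop (nhds 0) := by
  rw [Metric.tendsto_atTop]
  intro ε hε
  have hε4 : 0 < ε / 4 := by linarith
  -- find T with e t ≤ γ * (ε/4) for t ≥ T
  obtain ⟨T, hT⟩ := (Metric.tendsto_atTop.mp he) (γ * (ε / 4)) (by positivity)
  have heT : ∀ t, T ≤ t → e t ≤ γ * (ε / 4) := by
    intro t ht
    have := hT t ht
    rw [Real.dist_eq, sub_zero] at this
    exact (le_abs_self _).trans this.le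
  -- bound B on values b (T + r), r < n
  have hne : (Finset.range n).Nonempty := Finset.nonempty_range_iff.mpr hn.ne'
  set B : ℝ := (Finset.range n).sup' hne (fun r => b (T + r)) with hBdef
  have hB : ∀ r < n, b (T + r) ≤ B := fun r hr =>
    Finset.le_sup' (fun r => b (T + r)) (Finset.mem_range.mpr hr)
  have hB0 : 0 ≤ B := le_trans (hb (T + 0)) (hB 0 hn)
  -- key induction : ∀ k r, r < n → b (T + r + k * n) ≤ ε/4 + (1-γ)^k * B
  have key : ∀ k r, r < n → b (T + r + k * n) ≤ ε / 4 + (1 - γ) ^ k * B := by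
    intro k
    induction k with
    | zero =>
      intro r hr
      have h := hB r hr
      simp only [Nat.zero_mul, Nat.add_zero, pow_zero, one_mul]
      linarith
    | succ k ih =>
      intro r hr
      have h1 : b (T + r + k * n + n) ≤ (1 - γ) * b (T + r + k * n) + e (T + r + k * n) :=
        hrec _
      have h2 : e (T + r + k * n) ≤ γ * (ε / 4) := heT _ (by omega)
      have h3 := ih r hr
      have h4 : (0:ℝ) ≤ 1 - γ := by linarith
      have heq : T + r + (k + 1) * n = T + r + k * n + n := by ring
      rw [heq]
      calc b (T + r + k * n + n) ≤ (1 - γ) * b (T + r + k * n) + γ * (ε/4) := by linarith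
        _ ≤ (1 - γ) * (ε / 4 + (1 - γ) ^ k * B) + γ * (ε/4) := by nlinarith
        _ = ε/4 + (1-γ)^(k+1) * B := by ring
  -- (1-γ)^k B → 0, so pick K
  have hpow : Tendsto (fun k => (1 - γ) ^ k * B) atTop (nhds 0) := by
    have := tendsto_pow_atTop_nhds_zero_of_lt_one (by linarith : (0:ℝ) ≤ 1 - γ) (by linarith)
    simpa using this.mul_const B
  obtain ⟨K, hK⟩ := (Metric.tendsto_atTop.mp hpow) (ε / 4) hε4
  refine ⟨T + n + K * n, fun t ht => ?_⟩
  -- write t = T + r + k*n with r < n, k ≥ K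
  have htT : T ≤ t := by omega
  set s := t - T with hs
  have hsn : n ≤ s := by omega
  have : t = T + s % n + (s / n) * n := by
    have h := Nat.mod_add_div' s n
    omega
  have hkK : K ≤ s / n := by
    refine (Nat.le_div_iff_mul_le hn).mpr ?_
    omega
  rw [this]
  have hb1 := key (s / n) (s % n) (Nat.mod_lt _ hn)
  have hK1 := hK (s / n) hkK
  rw [Real.dist_eq, sub_zero] at hK1 ⊢
  have h6 : (1 - γ) ^ (s / n) * B ≤ ε / 4 := (le_abs_self _).trans hK1.le
  rw [abs_of_nonneg (hb _)]
  calc b (T + s % n + s / n * n) ≤ ε/4 + (1-γ)^(s/n) * B := by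
        have := key (s/n) (s%n) (Nat.mod_lt _ hn)
        linarith [this]
    _ ≤ ε/4 + ε/4 := by linarith
    _ < ε := by linarith


set_option maxHeartbeats 4000000 in
theorem stmt12 {V : Type*} [Fintype V] [DecidableEq V] (F : ℕ) (η L : ℝ)
    (hη : 0 < η) (hL : 0 < L) (E : V → V → Prop)
    (hrobust : RRobust E (2 * F + 1))
    (A : Finset V) (hlocal : ∀ v ∉ A, ((NIn E v) ∩ A).card ≤ F)
    (hR : (Aᶜ : Finset V).Nonempty)
    (f : V → ℝ → ℝ)
    (hconv : ∀ i ∈ (Aᶜ : Finset V), ConvexOn ℝ Set.univ (f i))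
    (hbdd : ∀ i ∈ (Aᶜ : Finset V), HasBoundedSubgradients (f i) L)
    (α : ℕ → ℝ) (hα0 : ∀ t, 0 ≤ α t) (hαlim : Tendsto α atTop (nhds 0))
    (x : ℕ → V → ℝ) (χ : ℕ → V → V → ℝ)
    (hdyn : LFByzantine E F η Aᶜ f α x χ) :
    ∃ q : ℕ → V → ℝ,
      (∀ t, (∀ j ∈ (Aᶜ : Finset V), 0 ≤ q t j) ∧ ∑ j ∈ (Aᶜ : Finset V), q t j = 1) ∧
      ∀ i ∈ (Aᶜ : Finset V),
        Tendsto (fun t => |x t i - ∑ j ∈ (Aᶜ : Finset V), q t j * x t j|)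
          atTop (nhds 0) := by
  classical
  obtain ⟨j₀, hj₀⟩ := hR
  set R : Finset V := Aᶜ with hRdef
  have hRne : R.Nonempty := ⟨j₀, hj₀⟩
  set n := R.card with hndef
  have hn0 : 0 < n := Finset.card_pos.mpr hRne
  obtain ⟨hχreg, hupd⟩ := hdyn
  set M : ℕ → ℝ := fun t => R.sup' hRne (x t) with hMdef
  set m : ℕ → ℝ := fun t => R.inf' hRne (x t) with hmdef
  have hxM : ∀ t, ∀ i ∈ R, x t i ≤ M t := fun t i hi => Finset.le_sup' (x t) hi
  have hxm : ∀ t, ∀ i ∈ R, m t ≤ x t i := fun t i hi => Finset.inf'_le (x t) hi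
  have hmM : ∀ t, m t ≤ M t := fun t => (hxm t j₀ hj₀).trans (hxM t j₀ hj₀)
  have hRA : ∀ i : V, i ∈ R ↔ i ∉ A := fun i => Finset.mem_compl
  -- η ≤ 1
  have hη1 : η ≤ 1 := by
    obtain ⟨J, a, d, hJ, ha, hsum, hsg, hx'⟩ := hupd 0 j₀ hj₀
    have h1 : η ≤ a j₀ := ha j₀ (Finset.mem_insert_self _ _)
    have h2 : 0 ≤ ∑ j ∈ J, a j := Finset.sum_nonneg fun j hj =>
      le_trans hη.le (ha j (Finset.mem_insert_of_mem hj))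
    linarith
  -- KEY upper bound lemma
  have key : ∀ t : ℕ, ∀ i ∈ R, ∀ B c : ℝ, M t ≤ B → c ≤ B →
      (x t i ≤ c ∨ (c < x t i ∧ ∃ S : Finset V, (∀ j ∈ R, j ∉ S → x t j ≤ c) ∧
        2 * F + 1 ≤ ((NIn E i) \ S).card)) →
      x (t + 1) i ≤ B - η * (B - c) + α t * L := by
    intro t i hi B c hMB hcB hcase
    obtain ⟨J, a, d, hJ, ha, hsum, hsg, hx'⟩ := hupd t i hi
    have hann : ∀ j ∈ insert i J, 0 ≤ a j := fun j hj => le_trans hη.le (ha j hj)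
    have haJ : ∀ j ∈ J, 0 ≤ a j := fun j hj => hann j (Finset.mem_insert_of_mem hj)
    have hai : 0 ≤ a i := hann i (Finset.mem_insert_self _ _)
    have haiη : η ≤ a i := ha i (Finset.mem_insert_self _ _)
    have hiA : i ∉ A := (hRA i).mp hi
    have hNA : ((NIn E i) ∩ A).card ≤ F := hlocal i hiA
    have hxiM : x t i ≤ M t := hxM t i hi
    have hreg : ∀ j ∈ NIn E i, j ∉ A → χ t i j ≤ M t := by
      intro j _ hjA
      rw [hχreg t i hi j ((hRA j).mpr hjA)]
      exact hxM t j ((hRA j).mpr hjA)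
    have hJle : ∀ j ∈ J, χ t i j ≤ M t := retained_le hJ hNA hxiM hreg
    have hdL : |d| ≤ L := hbdd i hi _ d hsg
    have hzstep : x (t + 1) i ≤ (a i * x t i + ∑ j ∈ J, a j * χ t i j) + α t * L := by
      rw [hx']
      have h1 := abs_le.mp hdL
      have h2 := hα0 t
      nlinarith [h1.1, h1.2]
    have hz : (a i * x t i + ∑ j ∈ J, a j * χ t i j) ≤ B - η * (B - c) := by
      rcases hcase with hxc | ⟨hci, S, hS, hcard⟩
      · -- own value small
        have hsle : ∑ j ∈ J, a j * χ t i j ≤ ∑ j ∈ J, a j * B := by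
          refine Finset.sum_le_sum fun j hj => ?_
          exact mul_le_mul_of_nonneg_left ((hJle j hj).trans hMB) (haJ j hj)
        rw [← Finset.sum_mul] at hsle
        have hsa : ∑ j ∈ J, a j = 1 - a i := by linarith
        rw [hsa] at hsle
        have h3 : a i * x t i ≤ a i * c := mul_le_mul_of_nonneg_left hxc hai
        have h6 : 0 ≤ (a i - η) * (B - c) := mul_nonneg
          (by linarith : (0:ℝ) ≤ a i - η) (by linarith : (0:ℝ) ≤ B - c)
        have h7 : a i * c + (1 - a i) * B ≤ B - η * (B - c) := by nlinarith [h6]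
        linarith [hsle, h3, h7]
      · -- robust node: find a retained in-neighbor with small value
        obtain ⟨H, Lo, hJeq, hHsub, hH2, hH3, hH4, hLsub, hL2, hLall, hLcard⟩ := hJ
        have hLoF : Lo.card ≤ F := by
          by_cases hc2 : ((NIn E i).filter (fun j => χ t i j < x t i)).card ≤ F
          · rw [hLall hc2]; exact hc2
          · push_neg at hc2; rw [hLcard hc2]
        have hWcard : F + 1 ≤ (((NIn E i) \ S) \ A).card := by
          have h1 : (((NIn E i) \ S) ∩ A).card ≤ F := by
            refine le_trans (Finset.card_le_card ?_) hNA
            intro k hk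
            rw [Finset.mem_inter] at hk ⊢
            exact ⟨(Finset.mem_sdiff.mp hk.1).1, hk.2⟩
          have h2 := Finset.card_sdiff_add_card_inter ((NIn E i) \ S) A
          omega
        have hWLo : (((NIn E i \ S) \ A) \ Lo).Nonempty := by
          rw [← Finset.card_pos]
          have := Finset.le_card_sdiff Lo ((NIn E i \ S) \ A)
          omega
        obtain ⟨j', hj'⟩ := hWLo
        rw [Finset.mem_sdiff] at hj'
        obtain ⟨hj'W, hj'Lo⟩ := hj'
        rw [Finset.mem_sdiff, Finset.mem_sdiff] at hj'W
        obtain ⟨⟨hj'N, hj'S⟩, hj'A⟩ := hj'W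
        have hj'R : j' ∈ R := (hRA j').mpr hj'A
        have hj'c : χ t i j' ≤ c := by
          rw [hχreg t i hi j' hj'R]
          exact hS j' hj'R hj'S
        have hj'H : j' ∉ H := by
          intro hmem
          have := (Finset.mem_filter.mp (hHsub hmem)).2
          linarith
        have hj'J : j' ∈ J := by
          rw [hJeq, Finset.mem_sdiff, Finset.mem_union]
          exact ⟨hj'N, fun h => h.elim hj'H hj'Lo⟩
        -- split the sum
        have hsplit : ∑ j ∈ J, a j * χ t i j
            = a j' * χ t i j' + ∑ j ∈ J.erase j', a j * χ t i j :=
          (Finset.add_sum_erase J (fun j => a j * χ t i j) hj'J).symm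
        have haj' : η ≤ a j' := ha j' (Finset.mem_insert_of_mem hj'J)
        have hsle : ∑ j ∈ J.erase j', a j * χ t i j ≤ (∑ j ∈ J.erase j', a j) * B := by
          rw [Finset.sum_mul]
          refine Finset.sum_le_sum fun j hj => ?_
          exact mul_le_mul_of_nonneg_left
            ((hJle j (Finset.mem_of_mem_erase hj)).trans hMB)
            (haJ j (Finset.mem_of_mem_erase hj))
        have hsumsplit : a j' + ∑ j ∈ J.erase j', a j = ∑ j ∈ J, a j :=
          Finset.add_sum_erase J a hj'J
        have h3 : a i * x t i ≤ a i * B := mul_le_mul_of_nonneg_left (hxiM.trans hMB) hai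
        have h4 : a j' * χ t i j' ≤ a j' * c :=
          mul_le_mul_of_nonneg_left hj'c (le_trans hη.le haj')
        have h5 : 0 ≤ ∑ j ∈ J.erase j', a j :=
          Finset.sum_nonneg fun j hj => haJ j (Finset.mem_of_mem_erase hj)
        have hsa' : ∑ j ∈ J.erase j', a j = 1 - a i - a j' := by linarith
        rw [hsa'] at hsle
        rw [hsplit]
        have h6 : 0 ≤ (a j' - η) * (B - c) := mul_nonneg
          (by linarith : (0:ℝ) ≤ a j' - η) (by linarith : (0:ℝ) ≤ B - c)
        have h7 : B - a j' * (B - c) ≤ B - η * (B - c) := by nlinarith [h6]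
        have h8 : a i * B + a j' * c + (1 - a i - a j') * B = B - a j' * (B - c) := by ring
        linarith [h3, h4, hsle, h7, h8]
    linarith
  -- KEY lower bound lemma (mirror)
  have key' : ∀ t : ℕ, ∀ i ∈ R, ∀ B c : ℝ, B ≤ m t → B ≤ c →
      (c ≤ x t i ∨ (x t i < c ∧ ∃ S : Finset V, (∀ j ∈ R, j ∉ S → c ≤ x t j) ∧
        2 * F + 1 ≤ ((NIn E i) \ S).card)) →
      B + η * (c - B) - α t * L ≤ x (t + 1) i := by
    intro t i hi B c hMB hcB hcase
    obtain ⟨J, a, d, hJ, ha, hsum, hsg, hx'⟩ := hupd t i hi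
    have hann : ∀ j ∈ insert i J, 0 ≤ a j := fun j hj => le_trans hη.le (ha j hj)
    have haJ : ∀ j ∈ J, 0 ≤ a j := fun j hj => hann j (Finset.mem_insert_of_mem hj)
    have hai : 0 ≤ a i := hann i (Finset.mem_insert_self _ _)
    have haiη : η ≤ a i := ha i (Finset.mem_insert_self _ _)
    have hiA : i ∉ A := (hRA i).mp hi
    have hNA : ((NIn E i) ∩ A).card ≤ F := hlocal i hiA
    have hxiM : m t ≤ x t i := hxm t i hi
    have hreg : ∀ j ∈ NIn E i, j ∉ A → m t ≤ χ t i j := by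
      intro j _ hjA
      rw [hχreg t i hi j ((hRA j).mpr hjA)]
      exact hxm t j ((hRA j).mpr hjA)
    have hJle : ∀ j ∈ J, m t ≤ χ t i j := retained_ge hJ hNA hxiM hreg
    have hdL : |d| ≤ L := hbdd i hi _ d hsg
    have hzstep : (a i * x t i + ∑ j ∈ J, a j * χ t i j) - α t * L ≤ x (t + 1) i := by
      rw [hx']
      have h1 := abs_le.mp hdL
      have h2 := hα0 t
      nlinarith [h1.1, h1.2]
    have hz : B + η * (c - B) ≤ (a i * x t i + ∑ j ∈ J, a j * χ t i j) := by
      rcases hcase with hxc | ⟨hci, S, hS, hcard⟩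
      · have hsle : ∑ j ∈ J, a j * B ≤ ∑ j ∈ J, a j * χ t i j := by
          refine Finset.sum_le_sum fun j hj => ?_
          exact mul_le_mul_of_nonneg_left (hMB.trans (hJle j hj)) (haJ j hj)
        rw [← Finset.sum_mul] at hsle
        have hsa : ∑ j ∈ J, a j = 1 - a i := by linarith
        rw [hsa] at hsle
        have h3 : a i * c ≤ a i * x t i := mul_le_mul_of_nonneg_left hxc hai
        have h6 : 0 ≤ (a i - η) * (c - B) := mul_nonneg
          (by linarith : (0:ℝ) ≤ a i - η) (by linarith : (0:ℝ) ≤ c - B)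
        have h7 : B + η * (c - B) ≤ a i * c + (1 - a i) * B := by nlinarith [h6]
        linarith [hsle, h3, h7]
      · obtain ⟨H, Lo, hJeq, hHsub, hH2, hHall, hHcard, hLsub, hL2, hL3, hL4⟩ := hJ
        have hHoF : H.card ≤ F := by
          by_cases hc2 : ((NIn E i).filter (fun j => x t i < χ t i j)).card ≤ F
          · rw [hHall hc2]; exact hc2
          · push_neg at hc2; rw [hHcard hc2]
        have hWcard : F + 1 ≤ (((NIn E i) \ S) \ A).card := by
          have h1 : (((NIn E i) \ S) ∩ A).card ≤ F := by
            refine le_trans (Finset.card_le_card ?_) hNA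
            intro k hk
            rw [Finset.mem_inter] at hk ⊢
            exact ⟨(Finset.mem_sdiff.mp hk.1).1, hk.2⟩
          have h2 := Finset.card_sdiff_add_card_inter ((NIn E i) \ S) A
          omega
        have hWLo : (((NIn E i \ S) \ A) \ H).Nonempty := by
          rw [← Finset.card_pos]
          have := Finset.le_card_sdiff H ((NIn E i \ S) \ A)
          omega
        obtain ⟨j', hj'⟩ := hWLo
        rw [Finset.mem_sdiff] at hj'
        obtain ⟨hj'W, hj'H⟩ := hj'
        rw [Finset.mem_sdiff, Finset.mem_sdiff] at hj'W
        obtain ⟨⟨hj'N, hj'S⟩, hj'A⟩ := hj'W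
        have hj'R : j' ∈ R := (hRA j').mpr hj'A
        have hj'c : c ≤ χ t i j' := by
          rw [hχreg t i hi j' hj'R]
          exact hS j' hj'R hj'S
        have hj'Lo : j' ∉ Lo := by
          intro hmem
          have := (Finset.mem_filter.mp (hLsub hmem)).2
          linarith
        have hj'J : j' ∈ J := by
          rw [hJeq, Finset.mem_sdiff, Finset.mem_union]
          exact ⟨hj'N, fun h => h.elim hj'H hj'Lo⟩
        have hsplit : ∑ j ∈ J, a j * χ t i j
            = a j' * χ t i j' + ∑ j ∈ J.erase j', a j * χ t i j :=
          (Finset.add_sum_erase J (fun j => a j * χ t i j) hj'J).symm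
        have haj' : η ≤ a j' := ha j' (Finset.mem_insert_of_mem hj'J)
        have hsle : (∑ j ∈ J.erase j', a j) * B ≤ ∑ j ∈ J.erase j', a j * χ t i j := by
          rw [Finset.sum_mul]
          refine Finset.sum_le_sum fun j hj => ?_
          exact mul_le_mul_of_nonneg_left
            (hMB.trans (hJle j (Finset.mem_of_mem_erase hj)))
            (haJ j (Finset.mem_of_mem_erase hj))
        have hsumsplit : a j' + ∑ j ∈ J.erase j', a j = ∑ j ∈ J, a j :=
          Finset.add_sum_erase J a hj'J
        have h3 : a i * B ≤ a i * x t i := mul_le_mul_of_nonneg_left (hMB.trans hxiM) hai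
        have h4 : a j' * c ≤ a j' * χ t i j' :=
          mul_le_mul_of_nonneg_left hj'c (le_trans hη.le haj')
        have h5 : 0 ≤ ∑ j ∈ J.erase j', a j :=
          Finset.sum_nonneg fun j hj => haJ j (Finset.mem_of_mem_erase hj)
        have hsa' : ∑ j ∈ J.erase j', a j = 1 - a i - a j' := by linarith
        rw [hsa'] at hsle
        rw [hsplit]
        have h6 : 0 ≤ (a j' - η) * (c - B) := mul_nonneg
          (by linarith : (0:ℝ) ≤ a j' - η) (by linarith : (0:ℝ) ≤ c - B)
        have h7 : B + η * (c - B) ≤ B + a j' * (c - B) := by nlinarith [h6]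
        have h8 : a i * B + a j' * c + (1 - a i - a j') * B = B + a j' * (c - B) := by ring
        linarith [h3, h4, hsle, h7, h8]
    linarith
  -- contraction over windows of length n
  set γ : ℝ := η ^ n / 4 with hγdef
  have hγ0 : 0 < γ := by positivity
  have hγ1 : γ ≤ 1 := by
    have h := pow_le_one₀ hη.le hη1 (n := n)
    rw [hγdef]; linarith
  have contract : ∀ t₀ : ℕ, M (t₀ + n) - m (t₀ + n) ≤
      (1 - γ) * (M t₀ - m t₀) + 2 * (L * ∑ u ∈ Finset.range n, α (t₀ + u)) := by
    intro t₀
    set Aa : ℕ → ℝ := fun s => L * ∑ u ∈ Finset.range s, α (t₀ + u) with hAadef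
    have hAa0 : Aa 0 = 0 := by simp [hAadef]
    have hAasucc : ∀ s, Aa (s + 1) = Aa s + α (t₀ + s) * L := by
      intro s; simp only [hAadef, Finset.sum_range_succ]; ring
    have hAann : ∀ s, 0 ≤ Aa s :=
      fun s => mul_nonneg hL.le (Finset.sum_nonneg fun u _ => hα0 _)
    have hAan : Aa n = L * ∑ u ∈ Finset.range n, α (t₀ + u) := rfl
    have hbounds : ∀ s : ℕ, M (t₀ + s) ≤ M t₀ + Aa s ∧ m t₀ - Aa s ≤ m (t₀ + s) := by
      intro s
      induction s with
      | zero => simp [hAa0]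
      | succ s ih =>
        constructor
        · refine Finset.sup'_le _ _ fun i hi => ?_
          have h1 := key (t₀ + s) i hi (M t₀ + Aa s) (M t₀ + Aa s) ih.1 le_rfl
            (Or.inl ((hxM _ i hi).trans ih.1))
          rw [hAasucc]
          calc x (t₀ + (s + 1)) i
              ≤ (M t₀ + Aa s) - η * ((M t₀ + Aa s) - (M t₀ + Aa s)) + α (t₀ + s) * L := h1
            _ = M t₀ + (Aa s + α (t₀ + s) * L) := by ring
        · refine Finset.le_inf' _ _ fun i hi => ?_
          have h1 := key' (t₀ + s) i hi (m t₀ - Aa s) (m t₀ - Aa s) ih.2 le_rfl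
            (Or.inl (ih.2.trans (hxm _ i hi)))
          rw [hAasucc]
          calc m t₀ - (Aa s + α (t₀ + s) * L)
              = (m t₀ - Aa s) + η * ((m t₀ - Aa s) - (m t₀ - Aa s)) - α (t₀ + s) * L := by ring
            _ ≤ x (t₀ + (s + 1)) i := h1
    by_cases hpos : 0 < M t₀ - m t₀
    case neg =>
      have hD0 : M t₀ - m t₀ = 0 := le_antisymm (not_lt.mp hpos) (by linarith [hmM t₀])
      have h1 := (hbounds n).1
      have h2 := (hbounds n).2
      nlinarith [hAann n]
    case pos =>
      set ε : ℝ := (M t₀ - m t₀) / 4 with hεdef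
      have hε : 0 < ε := by rw [hεdef]; linarith
      set Smax : ℕ → Finset V :=
        fun s => R.filter (fun i => M t₀ + Aa s - η ^ s * ε < x (t₀ + s) i) with hSmaxdef
      set Smin : ℕ → Finset V :=
        fun s => R.filter (fun i => x (t₀ + s) i < m t₀ - Aa s + η ^ s * ε) with hSmindef
      have hpow1 : ∀ s : ℕ, η ^ s ≤ 1 := fun s => pow_le_one₀ hη.le hη1
      have hpown : ∀ s : ℕ, 0 < η ^ s := fun s => pow_pos hη s
      have hthresh : ∀ s : ℕ, m t₀ - Aa s + η ^ s * ε ≤ M t₀ + Aa s - η ^ s * ε := by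
        intro s
        have h1 : η ^ s * ε ≤ ε := mul_le_of_le_one_left hε.le (hpow1 s)
        have h2 := hAann s
        linarith [hεdef]
      have hdisj : ∀ s, Disjoint (Smax s) (Smin s) := by
        intro s
        rw [Finset.disjoint_left]
        intro i hi1 hi2
        have h1 := (Finset.mem_filter.mp hi1).2
        have h2 := (Finset.mem_filter.mp hi2).2
        have := hthresh s
        linarith
      have hstepmax : ∀ s : ℕ, ∀ i ∈ R,
          (x (t₀ + s) i ≤ M t₀ + Aa s - η ^ s * ε ∨
            (i ∈ Smax s ∧ 2 * F + 1 ≤ ((NIn E i) \ Smax s).card)) →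
          x (t₀ + s + 1) i ≤ M t₀ + Aa (s + 1) - η ^ (s + 1) * ε := by
        intro s i hi hc
        have hcB : M t₀ + Aa s - η ^ s * ε ≤ M t₀ + Aa s := by
          have := (hpown s).le
          nlinarith [hε.le]
        have hcase : x (t₀ + s) i ≤ M t₀ + Aa s - η ^ s * ε ∨
            (M t₀ + Aa s - η ^ s * ε < x (t₀ + s) i ∧ ∃ S : Finset V,
              (∀ j ∈ R, j ∉ S → x (t₀ + s) j ≤ M t₀ + Aa s - η ^ s * ε) ∧
              2 * F + 1 ≤ ((NIn E i) \ S).card) := by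
          rcases hc with hc | ⟨him, hcard⟩
          · exact Or.inl hc
          · refine Or.inr ⟨(Finset.mem_filter.mp him).2, Smax s, ?_, hcard⟩
            intro j hjR hjS
            by_contra hlt
            push_neg at hlt
            exact hjS (Finset.mem_filter.mpr ⟨hjR, hlt⟩)
        have h1 := key (t₀ + s) i hi (M t₀ + Aa s) (M t₀ + Aa s - η ^ s * ε)
          (hbounds s).1 hcB hcase
        rw [hAasucc]
        calc x (t₀ + s + 1) i
            ≤ (M t₀ + Aa s) - η * ((M t₀ + Aa s) - (M t₀ + Aa s - η ^ s * ε))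
              + α (t₀ + s) * L := h1
          _ = M t₀ + (Aa s + α (t₀ + s) * L) - η ^ (s + 1) * ε := by ring
      have hstepmin : ∀ s : ℕ, ∀ i ∈ R,
          (m t₀ - Aa s + η ^ s * ε ≤ x (t₀ + s) i ∨
            (i ∈ Smin s ∧ 2 * F + 1 ≤ ((NIn E i) \ Smin s).card)) →
          m t₀ - Aa (s + 1) + η ^ (s + 1) * ε ≤ x (t₀ + s + 1) i := by
        intro s i hi hc
        have hcB : m t₀ - Aa s ≤ m t₀ - Aa s + η ^ s * ε := by
          have := (hpown s).le
          nlinarith [hε.le]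
        have hcase : m t₀ - Aa s + η ^ s * ε ≤ x (t₀ + s) i ∨
            (x (t₀ + s) i < m t₀ - Aa s + η ^ s * ε ∧ ∃ S : Finset V,
              (∀ j ∈ R, j ∉ S → m t₀ - Aa s + η ^ s * ε ≤ x (t₀ + s) j) ∧
              2 * F + 1 ≤ ((NIn E i) \ S).card) := by
          rcases hc with hc | ⟨him, hcard⟩
          · exact Or.inl hc
          · refine Or.inr ⟨(Finset.mem_filter.mp him).2, Smin s, ?_, hcard⟩
            intro j hjR hjS
            by_contra hlt
            push_neg at hlt
            exact hjS (Finset.mem_filter.mpr ⟨hjR, hlt⟩)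
        have h1 := key' (t₀ + s) i hi (m t₀ - Aa s) (m t₀ - Aa s + η ^ s * ε)
          (hbounds s).2 hcB hcase
        rw [hAasucc]
        calc m t₀ - (Aa s + α (t₀ + s) * L) + η ^ (s + 1) * ε
            = (m t₀ - Aa s) + η * ((m t₀ - Aa s + η ^ s * ε) - (m t₀ - Aa s))
              - α (t₀ + s) * L := by ring
          _ ≤ x (t₀ + s + 1) i := h1
      have hmonomax : ∀ s, Smax (s + 1) ⊆ Smax s := by
        intro s i hi1
        have hiR : i ∈ R := (Finset.mem_filter.mp hi1).1
        by_contra hi0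
        have hle : x (t₀ + s) i ≤ M t₀ + Aa s - η ^ s * ε := by
          by_contra hlt
          push_neg at hlt
          exact hi0 (Finset.mem_filter.mpr ⟨hiR, hlt⟩)
        have h1 := hstepmax s i hiR (Or.inl hle)
        have h2 := (Finset.mem_filter.mp hi1).2
        exact absurd h2 (not_lt.mpr h1)
      have hmonomin : ∀ s, Smin (s + 1) ⊆ Smin s := by
        intro s i hi1
        have hiR : i ∈ R := (Finset.mem_filter.mp hi1).1
        by_contra hi0
        have hle : m t₀ - Aa s + η ^ s * ε ≤ x (t₀ + s) i := by
          by_contra hlt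
          push_neg at hlt
          exact hi0 (Finset.mem_filter.mpr ⟨hiR, hlt⟩)
        have h1 := hstepmin s i hiR (Or.inl hle)
        have h2 := (Finset.mem_filter.mp hi1).2
        exact absurd h2 (not_lt.mpr h1)
      have hdec : ∀ s, (Smax s).Nonempty → (Smin s).Nonempty →
          (Smax (s + 1)).card + (Smin (s + 1)).card + 1 ≤ (Smax s).card + (Smin s).card := by
        intro s h1 h2
        rcases hrobust (Smax s) (Smin s) h1 h2 (hdisj s) with ⟨i, hiS, hic⟩ | ⟨i, hiS, hic⟩
        · have hiR : i ∈ R := (Finset.mem_filter.mp hiS).1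
          have hic' : 2 * F + 1 ≤ ((NIn E i) \ Smax s).card := by convert hic using 4
          have hx1 := hstepmax s i hiR (Or.inr ⟨hiS, hic'⟩)
          have hnot : i ∉ Smax (s + 1) :=
            fun h => absurd (Finset.mem_filter.mp h).2 (not_lt.mpr hx1)
          have hsub : Smax (s + 1) ⊆ (Smax s).erase i := by
            intro k hk
            exact Finset.mem_erase.mpr ⟨fun hki => hnot (hki ▸ hk), hmonomax s hk⟩
          have hc1 := Finset.card_le_card hsub
          have hc2 := Finset.card_erase_of_mem hiS
          have hc3 := Finset.card_le_card (hmonomin s)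
          have hc4 : 0 < (Smax s).card := Finset.card_pos.mpr ⟨i, hiS⟩
          omega
        · have hiR : i ∈ R := (Finset.mem_filter.mp hiS).1
          have hic' : 2 * F + 1 ≤ ((NIn E i) \ Smin s).card := by convert hic using 4
          have hx1 := hstepmin s i hiR (Or.inr ⟨hiS, hic'⟩)
          have hnot : i ∉ Smin (s + 1) :=
            fun h => absurd (Finset.mem_filter.mp h).2 (not_lt.mpr hx1)
          have hsub : Smin (s + 1) ⊆ (Smin s).erase i := by
            intro k hk
            exact Finset.mem_erase.mpr ⟨fun hki => hnot (hki ▸ hk), hmonomin s hk⟩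
          have hc1 := Finset.card_le_card hsub
          have hc2 := Finset.card_erase_of_mem hiS
          have hc3 := Finset.card_le_card (hmonomax s)
          have hc4 : 0 < (Smin s).card := Finset.card_pos.mpr ⟨i, hiS⟩
          omega
      have hempty : Smax n = ∅ ∨ Smin n = ∅ := by
        by_contra h
        push_neg at h
        have h1 : (Smax n).Nonempty := h.1
        have h2 : (Smin n).Nonempty := h.2
        have hchainmax : ∀ s k : ℕ, Smax (s + k) ⊆ Smax s := by
          intro s k
          induction k with
          | zero => exact Finset.Subset.refl _
          | succ k ih => exact (hmonomax (s + k)).trans ih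
        have hchainmin : ∀ s k : ℕ, Smin (s + k) ⊆ Smin s := by
          intro s k
          induction k with
          | zero => exact Finset.Subset.refl _
          | succ k ih => exact (hmonomin (s + k)).trans ih
        have hne : ∀ s, s ≤ n → (Smax s).Nonempty ∧ (Smin s).Nonempty := by
          intro s hs
          constructor
          · obtain ⟨v, hv⟩ := h1
            have hsub : Smax n ⊆ Smax s := by
              have := hchainmax s (n - s)
              rwa [show s + (n - s) = n from by omega] at this
            exact ⟨v, hsub hv⟩
          · obtain ⟨v, hv⟩ := h2
            have hsub : Smin n ⊆ Smin s := by
              have := hchainmin s (n - s)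
              rwa [show s + (n - s) = n from by omega] at this
            exact ⟨v, hsub hv⟩
        have hcardsum : ∀ s, s ≤ n → (Smax s).card + (Smin s).card + s ≤ n := by
          intro s
          induction s with
          | zero =>
            intro _
            have hu : Smax 0 ∪ Smin 0 ⊆ R :=
              Finset.union_subset (Finset.filter_subset _ _) (Finset.filter_subset _ _)
            have hc := Finset.card_union_of_disjoint (hdisj 0)
            have := Finset.card_le_card hu
            omega
          | succ s ih =>
            intro hs
            have h3 := ih (by omega)
            have h4 := hdec s (hne s (by omega)).1 (hne s (by omega)).2
            omega
        have h5 := hcardsum n le_rfl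
        have h6 : 0 < (Smax n).card := Finset.card_pos.mpr h1
        have h7 : 0 < (Smin n).card := Finset.card_pos.mpr h2
        omega
      have hγε : γ * (M t₀ - m t₀) = η ^ n * ε := by
        rw [hγdef, hεdef]; ring
      rcases hempty with he | he
      · have hMn : M (t₀ + n) ≤ M t₀ + Aa n - η ^ n * ε := by
          refine Finset.sup'_le _ _ fun i hi => ?_
          by_contra hgt
          push_neg at hgt
          exact (Finset.eq_empty_iff_forall_notMem.mp he i)
            (Finset.mem_filter.mpr ⟨hi, hgt⟩)
        have hmn := (hbounds n).2
        linarith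
      · have hmn : m t₀ - Aa n + η ^ n * ε ≤ m (t₀ + n) := by
          refine Finset.le_inf' _ _ fun i hi => ?_
          by_contra hgt
          push_neg at hgt
          exact (Finset.eq_empty_iff_forall_notMem.mp he i)
            (Finset.mem_filter.mpr ⟨hi, hgt⟩)
        have hMn := (hbounds n).1
        linarith
  -- pass to the limit
  have hsum0 : Tendsto (fun t => ∑ u ∈ Finset.range n, α (t + u)) atTop (nhds 0) := by
    have h := tendsto_finset_sum (Finset.range n)
      (fun u (_ : u ∈ Finset.range n) => hαlim.comp (tendsto_add_atTop_nat u))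
    simpa using h
  have he : Tendsto (fun t => 2 * (L * ∑ u ∈ Finset.range n, α (t + u))) atTop (nhds 0) := by
    have h := hsum0.const_mul (2 * L)
    simp only [mul_zero] at h
    refine h.congr fun t => by ring
  have hDlim : Tendsto (fun t => M t - m t) atTop (nhds 0) :=
    tendsto_of_contract hn0 hγ0 hγ1 (fun t => by linarith [hmM t]) contract he
  -- assemble the stochastic vectors
  refine ⟨fun t j => if j = j₀ then 1 else 0, fun t => ⟨fun j _ => ?_, ?_⟩, ?_⟩
  · dsimp only
    split <;> norm_num
  · simp [hj₀]
  · intro i hi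
    have hsum : ∀ t, ∑ j ∈ R, (if j = j₀ then (1:ℝ) else 0) * x t j = x t j₀ := by
      intro t
      rw [Finset.sum_congr rfl
        (fun j _ => by split <;> simp_all : ∀ j ∈ R,
          (if j = j₀ then (1:ℝ) else 0) * x t j = if j = j₀ then x t j else 0)]
      simp [Finset.sum_ite_eq', hj₀]
    refine squeeze_zero (fun t => abs_nonneg _) (fun t => ?_) hDlim
    rw [hsum t]
    rw [abs_le]
    constructor
    · have := hxm t i hi
      have := hxM t j₀ hj₀
      linarith
    · have := hxM t i hi
      have := hxm t j₀ hj₀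
      linarith
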